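/- arXiv:2005.13598 — 2 statements merged into one kernel-verified Lean document; each statement's English description precedes it below -/
import Mathlib

section
/- Let θ be a root of unity with θ ∉ Q(√−3) and θ ≠ ±1, and let a ∈ Q with a ≠ 0, ±1. Then there is no root of unity x ≠ 1 such that θ − x/θ − a x + a = 0. Consequently, in a superrectangular space V = Q·1 + Q·θ not homothetic to Q(√−3), the rational 4-tuple (1, θ, θ+1, θ−1) cannot be extended to a rational 5-tuple (1, θ, θ+1, θ−1, θ+a). -/
open Polynomial Complex

lemma prod_primroots_int (Np : ℕ+) (u v : ℕ) :
    ∃ z : ℤ, ((z:ℚ):ℂ) = ∏ ρ ∈ primitiveRoots (Np : ℕ) ℂ, (ρ ^ u + ρ ^ v) := by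
  haveI : NeZero (Np : ℕ) := ⟨Np.pos.ne'⟩
  letI : Algebra ℚ (CyclotomicField (Np:ℕ) ℚ) := CyclotomicField.algebra _ _
  haveI := IsCyclotomicExtension.finiteDimensional {(Np:ℕ)} ℚ (CyclotomicField Np ℚ)
  have hηprim : IsPrimitiveRoot (IsCyclotomicExtension.zeta (Np:ℕ) ℚ (CyclotomicField Np ℚ)) (Np : ℕ) :=
    IsCyclotomicExtension.zeta_spec (Np:ℕ) ℚ (CyclotomicField Np ℚ)
  set η := IsCyclotomicExtension.zeta (Np:ℕ) ℚ (CyclotomicField Np ℚ) with hηdef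
  have hirr : Irreducible (cyclotomic ((Np : ℕ)) ℚ) := Polynomial.cyclotomic.irreducible_rat Np.pos
  have hηint : IsIntegral ℤ η := by
    refine ⟨X ^ (Np:ℕ) - 1, monic_X_pow_sub_C 1 Np.pos.ne', ?_⟩
    rw [eval₂_sub, eval₂_X_pow, eval₂_one, hηprim.pow_eq_one, sub_self]
  have hint : IsIntegral ℤ (η ^ u + η ^ v) := (hηint.pow u).add (hηint.pow v)
  have hnorm := Algebra.isIntegral_norm (R := ℤ) ℚ (L := CyclotomicField Np ℚ) hint
  obtain ⟨z, hz⟩ := IsIntegrallyClosed.isIntegral_iff.mp hnorm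
  refine ⟨z, ?_⟩
  have h1 : algebraMap ℚ ℂ (Algebra.norm ℚ (η ^ u + η ^ v))
      = ∏ σ : CyclotomicField Np ℚ →ₐ[ℚ] ℂ, σ (η ^ u + η ^ v) :=
    Algebra.norm_eq_prod_embeddings ℚ ℂ _
  have h2 : ∏ σ : CyclotomicField Np ℚ →ₐ[ℚ] ℂ, σ (η ^ u + η ^ v)
      = ∏ ρ ∈ primitiveRoots (Np:ℕ) ℂ, (ρ ^ u + ρ ^ v) := by
    rw [← Finset.prod_coe_sort (primitiveRoots (Np:ℕ) ℂ)]
    refine Fintype.prod_equiv (hηprim.embeddingsEquivPrimitiveRoots ℂ hirr) _ _ (fun σ => ?_)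
    have hc := hηprim.embeddingsEquivPrimitiveRoots_apply_coe ℂ hirr σ
    rw [map_add, map_pow, map_pow, hc]
  have hz' : algebraMap ℚ ℂ ((z:ℚ)) = ((z:ℚ):ℂ) := by norm_num
  have hz'' : (z : ℚ) = Algebra.norm ℚ (η ^ u + η ^ v) := by exact_mod_cast hz
  rw [← hz', hz'', h1, h2]


/-- Two unit-modulus complex numbers whose sum has modulus ≥ 2 are equal. -/
lemma unit_add_abs_two {u v : ℂ} (hu : ‖u‖ = 1) (hv : ‖v‖ = 1)
    (h : 2 ≤ ‖u + v‖) : u = v := by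
  have hre : 1 ≤ (u * (starRingEnd ℂ) v).re := by
    have h4 : (4:ℝ) ≤ Complex.normSq (u + v) := by
      have := Complex.sq_norm (u + v)
      nlinarith [norm_nonneg (u+v)]
    have hnu : Complex.normSq u = 1 := by rw [← Complex.sq_norm, hu]; norm_num
    have hnv : Complex.normSq v = 1 := by rw [← Complex.sq_norm, hv]; norm_num
    have := Complex.normSq_add u v
    nlinarith
  set z := u * (starRingEnd ℂ) v with hz
  have hzabs : ‖z‖ = 1 := by
    rw [hz, norm_mul, Complex.norm_conj, hu, hv]; norm_num
  have hzre : z.re = 1 := le_antisymm (hzabs ▸ Complex.re_le_norm z) hre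
  have hzim : z.im = 0 := by
    have h1 : z.re^2 + z.im^2 = 1 := by
      have h := Complex.sq_norm z
      rw [hzabs] at h
      rw [Complex.normSq_apply] at h
      nlinarith
    nlinarith
  have hz1 : z = 1 := Complex.ext (by simp [hzre]) (by simp [hzim])
  have hnv : Complex.normSq v = 1 := by rw [← Complex.sq_norm, hv]; norm_num
  calc u = u * ((starRingEnd ℂ) v * v) := by
            rw [mul_comm ((starRingEnd ℂ) v) v, Complex.mul_conj, hnv]; simp
    _ = z * v := by rw [hz]; ring
    _ = v := by rw [hz1, one_mul]

/-- Core: no root of unity `x` satisfies the unit equation. -/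
lemma no_unit_eq (θ : ℂ) (hru : ∃ n : ℕ, 0 < n ∧ θ ^ n = 1)
    (hθ : θ ∉ Submodule.span ℚ ({1, (Real.sqrt 3 : ℂ) * Complex.I} : Set ℂ))
    (hθ1 : θ ≠ 1) (hθ1' : θ ≠ -1)
    (a : ℚ) (ha0 : a ≠ 0) (ha1 : a ≠ 1) (ha1' : a ≠ -1) :
    ¬ ∃ x : ℂ, (∃ n : ℕ, 0 < n ∧ x ^ n = 1) ∧
        θ - x / θ - (a : ℂ) * x + (a : ℂ) = 0 := by
  rintro ⟨x, ⟨nx, hnx0, hnx⟩, heq⟩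
  obtain ⟨nθ, hnθ0, hnθ⟩ := hru
  have hθ0 : θ ≠ 0 := by
    intro h; rw [h] at hnθ; simp [zero_pow hnθ0.ne'] at hnθ
  have hθ2 : θ ^ 2 ≠ 1 := by
    intro h
    have : (θ - 1) * (θ + 1) = 0 := by linear_combination h
    rcases mul_eq_zero.mp this with h' | h'
    · exact hθ1 (by linear_combination h')
    · exact hθ1' (by linear_combination h')
  -- the companion root of unity
  set ψ : ℂ := -x / θ with hψ
  have heq' : θ + ψ + (a:ℂ) * (θ * ψ) + a = 0 := by
    have hmul : θ * ψ = -x := by rw [hψ]; field_simp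
    rw [hmul, hψ]
    linear_combination heq
  set N : ℕ := 2 * nθ * nx with hN
  have hN0 : 0 < N := by positivity
  haveI : NeZero N := ⟨hN0.ne'⟩
  have hθN : θ ^ N = 1 := by
    rw [hN, show 2 * nθ * nx = nθ * (2 * nx) by ring, pow_mul, hnθ, one_pow]
  have hxN : x ^ N = 1 := by
    rw [hN, show 2 * nθ * nx = nx * (2 * nθ) by ring, pow_mul, hnx, one_pow]
  have hψN : ψ ^ N = 1 := by
    rw [hψ, div_pow, neg_pow, Even.neg_one_pow ⟨nθ * nx, by rw [hN]; ring⟩, one_mul,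
      hxN, hθN]
    norm_num
  set ζ : ℂ := Complex.exp (2 * Real.pi * Complex.I / N) with hζdef
  have hζ : IsPrimitiveRoot ζ N := Complex.isPrimitiveRoot_exp N hN0.ne'
  obtain ⟨s, hslt, hsθ⟩ := hζ.eq_pow_of_pow_eq_one hθN
  obtain ⟨t, htlt, htψ⟩ := hζ.eq_pow_of_pow_eq_one hψN
  -- the relation holds at every primitive N-th root of unity in ℂ
  have key : ∀ ρ : ℂ, IsPrimitiveRoot ρ N →
      ρ ^ s + ρ ^ t + (a:ℂ) * ρ ^ (s + t) + a = 0 := by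
    set g : ℚ[X] := X ^ s + X ^ t + C a * X ^ (s + t) + C a with hg
    have hgζ : aeval ζ g = 0 := by
      rw [hg]
      simp only [map_add, map_mul, map_pow, aeval_X, aeval_C, eq_ratCast]
      rw [pow_add, hsθ, htψ]
      exact heq'
    have hdvd : cyclotomic N ℚ ∣ g := by
      rw [Polynomial.cyclotomic_eq_minpoly_rat hζ hN0]
      exact minpoly.dvd ℚ ζ hgζ
    intro ρ hρ
    have hroot : aeval ρ (cyclotomic N ℚ) = 0 := by
      rw [aeval_def, ← eval_map, map_cyclotomic]
      exact (Polynomial.isRoot_cyclotomic_iff.mpr hρ)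
    obtain ⟨q, hq⟩ := hdvd
    have h2 : aeval ρ g = 0 := by rw [hq, map_mul, hroot, zero_mul]
    simp only [hg, map_add, map_mul, map_pow, aeval_X, aeval_C, eq_ratCast] at h2
    exact h2
  -- set up the finsets and counting
  classical
  set R : Finset ℂ := primitiveRoots N ℂ with hR
  have hζR : ζ ∈ R := by rw [hR, mem_primitiveRoots hN0]; exact hζ
  set Φ : ℕ := R.card with hΦ
  have hΦ0 : 0 < Φ := Finset.card_pos.mpr ⟨ζ, hζR⟩
  have habs1 : ∀ ρ ∈ R, ‖ρ‖ = 1 := by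
    intro ρ hρ
    have hρ' := (mem_primitiveRoots hN0).mp (hR ▸ hρ)
    have := Complex.norm_eq_one_of_pow_eq_one hρ'.pow_eq_one hN0.ne'
    exact this
  have habs2 : ∀ (u v : ℕ), ∀ ρ ∈ R, ‖ρ ^ u + ρ ^ v‖ ≤ 2 := by
    intro u v ρ hρ
    calc ‖ρ ^ u + ρ ^ v‖ ≤ ‖ρ ^ u‖ + ‖ρ ^ v‖ :=
          norm_add_le _ _
      _ ≤ 2 := by rw [norm_pow, norm_pow, habs1 ρ hρ, one_pow, one_pow]; norm_num
  have hrel : ∀ ρ ∈ R, ρ ^ s + ρ ^ t = (-(a:ℂ)) * (ρ ^ 0 + ρ ^ (s + t)) := by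
    intro ρ hρ
    have h := key ρ ((mem_primitiveRoots hN0).mp (hR ▸ hρ))
    rw [pow_zero]
    linear_combination h
  have hBne : ∀ ρ ∈ R, ρ ^ 0 + ρ ^ (s + t) ≠ 0 := by
    intro ρ hρ h0
    have hρ' := (mem_primitiveRoots hN0).mp (hR ▸ hρ)
    have hA0 : ρ ^ s + ρ ^ t = 0 := by rw [hrel ρ hρ, h0, mul_zero]
    have hst : ρ ^ s * ρ ^ t = -1 := by
      rw [← pow_add]; rw [pow_zero] at h0; linear_combination h0
    have h2s : ρ ^ s * ρ ^ s = 1 := by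
      have hsneg : ρ ^ s = -ρ ^ t := by linear_combination hA0
      calc ρ ^ s * ρ ^ s = -(ρ ^ s * ρ ^ t) := by rw [hsneg]; ring
        _ = 1 := by rw [hst]; ring
    obtain ⟨j, hjlt, hjζ⟩ := hρ'.eq_pow_of_pow_eq_one hζ.pow_eq_one
    apply hθ2
    calc θ ^ 2 = (ζ ^ s) ^ 2 := by rw [hsθ]
      _ = ((ρ ^ j) ^ s) ^ 2 := by rw [hjζ]
      _ = (ρ ^ s * ρ ^ s) ^ j := by ring
      _ = 1 := by rw [h2s, one_pow]
  have hAne : ∀ ρ ∈ R, ρ ^ s + ρ ^ t ≠ 0 := by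
    intro ρ hρ h0
    rw [hrel ρ hρ] at h0
    rcases mul_eq_zero.mp h0 with h' | h'
    · exact ha0 (by exact_mod_cast neg_eq_zero.mp (by exact_mod_cast h'))
    · exact hBne ρ hρ h'
  -- the two integer norms
  obtain ⟨zA, hzA⟩ := prod_primroots_int ⟨N, hN0⟩ s t
  obtain ⟨zB, hzB⟩ := prod_primroots_int ⟨N, hN0⟩ 0 (s + t)
  simp only [PNat.mk_coe] at hzA hzB
  rw [← hR] at hzA hzB
  have hprodAB : (∏ ρ ∈ R, (ρ ^ s + ρ ^ t)) = (-(a:ℂ)) ^ Φ * ∏ ρ ∈ R, (ρ ^ 0 + ρ ^ (s + t)) := by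
    rw [hΦ, ← Finset.prod_const, ← Finset.prod_mul_distrib]
    exact Finset.prod_congr rfl hrel
  have hzA0 : zA ≠ 0 := by
    intro h0
    rw [h0] at hzA
    exact (Finset.prod_ne_zero_iff.mpr hAne) (by exact_mod_cast hzA.symm)
  have hzB0 : zB ≠ 0 := by
    intro h0
    rw [h0] at hzB
    exact (Finset.prod_ne_zero_iff.mpr hBne) (by exact_mod_cast hzB.symm)
  -- the rational and integral equations
  have hQ : (zA : ℚ) = (-a) ^ Φ * zB := by
    have hc : ((zA : ℚ) : ℂ) = (((-a) ^ Φ * zB : ℚ) : ℂ) := by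
      rw [hzA, hprodAB, ← hzB]; push_cast; ring
    exact_mod_cast hc
  have hden : (-a) * (a.den : ℚ) = -(a.num : ℚ) := by
    rw [neg_mul, Rat.mul_den_eq_num]
  have hZ : zA * (a.den : ℤ) ^ Φ = (-a.num) ^ Φ * zB := by
    have hc : ((zA * (a.den : ℤ) ^ Φ : ℤ) : ℚ) = (((-a.num) ^ Φ * zB : ℤ) : ℚ) := by
      push_cast
      rw [hQ, ← hden]
      ring
    exact_mod_cast hc
  -- size bounds
  have hPle : ∀ u v : ℕ, ‖∏ ρ ∈ R, (ρ ^ u + ρ ^ v)‖ ≤ 2 ^ Φ := by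
    intro u v
    rw [norm_prod]
    calc (∏ ρ ∈ R, ‖ρ ^ u + ρ ^ v‖) ≤ ∏ _ρ ∈ R, (2:ℝ) :=
        Finset.prod_le_prod (fun ρ _ => norm_nonneg _) (habs2 u v)
      _ = 2 ^ Φ := by rw [Finset.prod_const, hΦ]
  have habs_cast : ∀ z : ℤ, ‖((z : ℚ) : ℂ)‖ = |(z : ℝ)| := by
    intro z
    rw [show (((z : ℚ)) : ℂ) = ((z : ℤ) : ℂ) by push_cast; ring, Complex.norm_intCast]
  have hzBbound : |zB| ≤ 2 ^ Φ := by
    have h1 : |(zB : ℝ)| ≤ 2 ^ Φ := by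
      rw [← habs_cast zB, hzB]; exact hPle 0 (s + t)
    exact_mod_cast h1
  have hzAbound : |zA| ≤ 2 ^ Φ := by
    have h1 : |(zA : ℝ)| ≤ 2 ^ Φ := by
      rw [← habs_cast zA, hzA]; exact hPle s t
    exact_mod_cast h1
  -- coprimality and divisibility
  have hcop : IsCoprime ((a.den : ℤ)) a.num := by
    rw [Int.isCoprime_iff_gcd_eq_one, Int.gcd]
    simpa [Nat.coprime_comm] using a.reduced
  have hdvdB : ((a.den : ℤ)) ^ Φ ∣ zB := by
    have h1 : ((a.den : ℤ)) ^ Φ ∣ (-a.num) ^ Φ * zB := hZ ▸ dvd_mul_left _ zA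
    exact ((hcop.neg_right).pow).dvd_of_dvd_mul_left h1
  have hdvdA : a.num ^ Φ ∣ zA := by
    have h2 : a.num ^ Φ ∣ (-a.num) ^ Φ * zB :=
      dvd_mul_of_dvd_left (pow_dvd_pow_of_dvd (dvd_neg.mpr dvd_rfl) Φ) zB
    rw [← hZ] at h2
    exact ((hcop.symm).pow).dvd_of_dvd_mul_right h2
  have hd2 : (a.den : ℤ) ≤ 2 := by
    have h1 : ((a.den : ℤ)) ^ Φ ≤ 2 ^ Φ :=
      le_trans (Int.le_of_dvd (abs_pos.mpr hzB0) ((dvd_abs _ _).mpr hdvdB)) hzBbound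
    by_contra hlt
    push_neg at hlt
    have : (2:ℤ) ^ Φ < (a.den : ℤ) ^ Φ := by
      apply pow_lt_pow_left₀ hlt (by norm_num) hΦ0.ne'
    omega
  have hc2 : |a.num| ≤ 2 := by
    have hdvd' : |a.num| ^ Φ ∣ |zA| := by
      rw [pow_abs]
      exact (abs_dvd _ _).mpr ((dvd_abs _ _).mpr hdvdA)
    have h1 : |a.num| ^ Φ ≤ 2 ^ Φ :=
      le_trans (Int.le_of_dvd (abs_pos.mpr hzA0) hdvd') hzAbound
    by_contra hlt
    push_neg at hlt
    have : (2:ℤ) ^ Φ < |a.num| ^ Φ := by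
      apply pow_lt_pow_left₀ hlt (by norm_num) hΦ0.ne'
    omega
  -- extract a single factor bound at ζ
  have hextract : ∀ u v : ℕ, (2:ℝ) ^ Φ ≤ ‖∏ ρ ∈ R, (ρ ^ u + ρ ^ v)‖ →
      2 ≤ ‖ζ ^ u + ζ ^ v‖ := by
    intro u v hge
    rw [norm_prod, ← Finset.mul_prod_erase R _ hζR] at hge
    have hrest0 : (0:ℝ) ≤ ∏ ρ ∈ R.erase ζ, ‖ρ ^ u + ρ ^ v‖ :=
      Finset.prod_nonneg fun ρ _ => norm_nonneg _
    have hrest : (∏ ρ ∈ R.erase ζ, ‖ρ ^ u + ρ ^ v‖) ≤ 2 ^ (Φ - 1) := by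
      calc (∏ ρ ∈ R.erase ζ, ‖ρ ^ u + ρ ^ v‖) ≤ ∏ _ρ ∈ R.erase ζ, (2:ℝ) :=
          Finset.prod_le_prod (fun ρ _ => norm_nonneg _)
            (fun ρ hρ => habs2 u v ρ (Finset.mem_of_mem_erase hρ))
        _ = 2 ^ (Φ - 1) := by rw [Finset.prod_const, Finset.card_erase_of_mem hζR, hΦ]
    have hpow2 : (2:ℝ) ^ Φ = 2 * 2 ^ (Φ - 1) := by
      rw [← pow_succ']
      congr 1
      omega
    have hP0 : (0:ℝ) < 2 ^ (Φ - 1) := by positivity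
    nlinarith [norm_nonneg (ζ ^ u + ζ ^ v),
      mul_le_mul_of_nonneg_left hrest (norm_nonneg (ζ ^ u + ζ ^ v))]
  have habsθ : ‖θ‖ = 1 := by rw [← hsθ, norm_pow, habs1 ζ hζR, one_pow]
  have habsψ : ‖ψ‖ = 1 := by rw [← htψ, norm_pow, habs1 ζ hζR, one_pow]
  -- determine the shape of a
  set m : ℕ := a.num.natAbs with hm
  have hmabs : (m:ℤ) = |a.num| := (Int.abs_eq_natAbs a.num).symm
  have hm2 : m ≤ 2 := by
    have : (m:ℤ) ≤ 2 := by rw [hmabs]; exact hc2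
    exact_mod_cast this
  have hm1 : 1 ≤ m := by
    have h0 : a.num ≠ 0 := Rat.num_ne_zero.mpr ha0
    have : m ≠ 0 := fun h => h0 (Int.natAbs_eq_zero.mp (hm ▸ h))
    omega
  have hd2' : a.den ≤ 2 := by exact_mod_cast hd2
  have hd1' : 1 ≤ a.den := a.pos
  have hne11 : ¬(m = 1 ∧ a.den = 1) := by
    rintro ⟨h1, h2⟩
    have hnum : a.num = 1 ∨ a.num = -1 := Int.natAbs_eq_iff.mp h1
    have haval : a = (a.num : ℚ) := by
      conv_lhs => rw [← Rat.num_div_den a]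
      rw [h2]; norm_num
    rcases hnum with h | h
    · exact ha1 (by rw [haval, h]; norm_num)
    · exact ha1' (by rw [haval, h]; norm_num)
  have hne22 : ¬(m = 2 ∧ a.den = 2) := by
    rintro ⟨h1, h2⟩
    have hred := a.reduced
    rw [hm] at h1
    rw [h1, h2] at hred
    norm_num [Nat.Coprime] at hred
  have hsplit : (a.den = 1 ∧ m = 2) ∨ (a.den = 2 ∧ m = 1) := by omega
  -- in both cases we obtain a quadratic equation for θ
  have hEe : ∃ e : ℚ, (e = 1 ∨ e = -1) ∧ θ ^ 2 + (e:ℂ) * θ + 1 = 0 := by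
    rcases hsplit with ⟨hdone, hmtwo⟩ | ⟨hdtwo, hmone⟩
    · -- a = ±2 : the |A| factors are all of modulus 2
      have hanum : a = (a.num : ℚ) := by
        conv_lhs => rw [← Rat.num_div_den a]
        rw [hdone]; norm_num
      have ha2 : a = 2 ∨ a = -2 := by
        rcases Int.natAbs_eq_iff.mp (hm ▸ hmtwo : a.num.natAbs = 2) with h | h
        · left; rw [hanum, h]; norm_num
        · right; rw [hanum, h]; norm_num
      have hnum2 : |a.num| = 2 := by rw [← hmabs, hmtwo]; norm_num
      have hzAeq : zA = (-a.num) ^ Φ * zB := by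
        have h := hZ
        rw [hdone] at h
        simpa using h
      have habsA : |zA| = 2 ^ Φ * |zB| := by
        rw [hzAeq, _root_.abs_mul, _root_.abs_pow, _root_.abs_neg, hnum2]
      have h1 : (2:ℤ) ^ Φ ≤ |zA| := by
        rw [habsA]
        exact le_mul_of_one_le_right (by positivity) (Int.one_le_abs hzB0)
      have hge : (2:ℝ) ^ Φ ≤ ‖∏ ρ ∈ R, (ρ ^ s + ρ ^ t)‖ := by
        rw [← hzA, habs_cast zA]
        calc ((2:ℝ)) ^ Φ = (((2:ℤ) ^ Φ : ℤ) : ℝ) := by push_cast; ring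
          _ ≤ ((|zA| : ℤ) : ℝ) := by exact_mod_cast h1
          _ = |(zA : ℝ)| := by push_cast; ring
      have h2A : 2 ≤ ‖ζ ^ s + ζ ^ t‖ := hextract s t hge
      rw [hsθ, htψ] at h2A
      have hθψ : θ = ψ := unit_add_abs_two habsθ habsψ h2A
      have heq2 := heq'
      rw [← hθψ] at heq2
      rcases ha2 with h | h
      · refine ⟨1, Or.inl rfl, ?_⟩
        rw [h] at heq2; push_cast at heq2 ⊢
        linear_combination heq2 / 2
      · refine ⟨-1, Or.inr rfl, ?_⟩
        rw [h] at heq2; push_cast at heq2 ⊢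
        linear_combination -heq2 / 2
    · -- a = ±1/2 : the |B| factors are all of modulus 2
      have ha2 : a = 1/2 ∨ a = -(1/2) := by
        rcases Int.natAbs_eq_iff.mp (hm ▸ hmone : a.num.natAbs = 1) with h | h
        · left
          conv_lhs => rw [← Rat.num_div_den a]
          rw [hdtwo, h]; norm_num
        · right
          conv_lhs => rw [← Rat.num_div_den a]
          rw [hdtwo, h]; norm_num
      have hnum1 : |a.num| = 1 := by rw [← hmabs, hmone]; norm_num
      have habsB : |zB| = 2 ^ Φ * |zA| := by
        have h : |zA * (a.den:ℤ)^Φ| = |(-a.num)^Φ * zB| := by rw [hZ]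
        rw [_root_.abs_mul, _root_.abs_mul, _root_.abs_pow, _root_.abs_pow, _root_.abs_neg,
          hnum1, one_pow, one_mul, hdtwo] at h
        rw [← h]
        norm_num [mul_comm]
      have h1 : (2:ℤ) ^ Φ ≤ |zB| := by
        rw [habsB]
        exact le_mul_of_one_le_right (by positivity) (Int.one_le_abs hzA0)
      have hge : (2:ℝ) ^ Φ ≤ ‖∏ ρ ∈ R, (ρ ^ 0 + ρ ^ (s + t))‖ := by
        rw [← hzB, habs_cast zB]
        calc ((2:ℝ)) ^ Φ = (((2:ℤ) ^ Φ : ℤ) : ℝ) := by push_cast; ring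
          _ ≤ ((|zB| : ℤ) : ℝ) := by exact_mod_cast h1
          _ = |(zB : ℝ)| := by push_cast; ring
      have h2B : 2 ≤ ‖ζ ^ 0 + ζ ^ (s + t)‖ := hextract 0 (s + t) hge
      rw [pow_zero, pow_add, hsθ, htψ] at h2B
      have habsθψ : ‖θ * ψ‖ = 1 := by rw [norm_mul, habsθ, habsψ, one_mul]
      have hθψ : θ * ψ = 1 :=
        (unit_add_abs_two norm_one habsθψ h2B).symm
      refine ⟨2 * a, ?_, ?_⟩
      · rcases ha2 with h | h
        · left; rw [h]; norm_num
        · right; rw [h]; norm_num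
      · push_cast
        linear_combination θ * heq' - (1 + (a:ℂ) * θ) * hθψ
  -- conclude θ ∈ ℚ(√-3), contradiction
  obtain ⟨e, he, hE⟩ := hEe
  have he2 : ((e:ℚ):ℂ) ^ 2 = 1 := by rcases he with h | h <;> rw [h] <;> norm_num
  have h3 : ((Real.sqrt 3 : ℝ) : ℂ) ^ 2 = 3 := by
    rw [← Complex.ofReal_pow, Real.sq_sqrt (by norm_num : (0:ℝ) ≤ 3)]
    norm_num
  set w : ℂ := (Real.sqrt 3 : ℂ) * Complex.I / 2 with hw
  have hw2 : w ^ 2 = -(3/4) := by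
    rw [hw, div_pow, mul_pow, Complex.I_sq, h3]
    norm_num
  have hfact : (θ + (e:ℂ)/2 - w) * (θ + (e:ℂ)/2 + w) = 0 := by
    linear_combination hE + he2/4 - hw2
  have htheta : θ = w - (e:ℂ)/2 ∨ θ = -w - (e:ℂ)/2 := by
    rcases mul_eq_zero.mp hfact with h | h
    · left; linear_combination h
    · right; linear_combination h
  apply hθ
  rw [Submodule.mem_span_pair]
  rcases htheta with h | h
  · refine ⟨-e/2, 1/2, ?_⟩
    rw [Rat.smul_def, Rat.smul_def, h, hw]
    push_cast
    ring
  · refine ⟨-e/2, -(1/2), ?_⟩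
    rw [Rat.smul_def, Rat.smul_def, h, hw]
    push_cast
    ring





/-- Let `θ` be a root of unity, `θ ∉ ℚ(√−3)`, `θ ≠ ±1`, and let `a ∈ ℚ`,
`a ≠ 0, ±1`.  Then there is no root of unity `x ≠ 1` with
`θ − x/θ − a·x + a = 0`; consequently, in the superrectangular space
`V = ℚ·1 + ℚ·θ`, the rational 4-tuple `(1, θ, θ+1, θ−1)` cannot be extended to a
rational 5-tuple `(1, θ, θ+1, θ−1, θ+a)`. -/
theorem no_five_tuple_in_superrectangular
    (θ : ℂ) (hru : ∃ n : ℕ, 0 < n ∧ θ ^ n = 1)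
    (hθ : θ ∉ Submodule.span ℚ ({1, (Real.sqrt 3 : ℂ) * Complex.I} : Set ℂ))
    (hθ1 : θ ≠ 1) (hθ1' : θ ≠ -1)
    (a : ℚ) (ha0 : a ≠ 0) (ha1 : a ≠ 1) (ha1' : a ≠ -1) :
    (¬ ∃ x : ℂ, (∃ n : ℕ, 0 < n ∧ x ^ n = 1) ∧ x ≠ 1 ∧
        θ - x / θ - (a : ℂ) * x + (a : ℂ) = 0) ∧
    ¬ (∀ u ∈ ({1, θ, θ + 1, θ - 1, θ + (a : ℂ)} : Set ℂ),
        ∀ v ∈ ({1, θ, θ + 1, θ - 1, θ + (a : ℂ)} : Set ℂ), u ≠ v →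
          (∀ r : ℝ, v ≠ (r : ℂ) * u) ∧
          ∃ q : ℚ, Complex.arg (v / u) = (q : ℝ) * Real.pi) := by
  have part1 : ¬ ∃ x : ℂ, (∃ n : ℕ, 0 < n ∧ x ^ n = 1) ∧ x ≠ 1 ∧
      θ - x / θ - (a : ℂ) * x + (a : ℂ) = 0 := by
    rintro ⟨x, hx, -, heqx⟩
    exact no_unit_eq θ hru hθ hθ1 hθ1' a ha0 ha1 ha1' ⟨x, hx, heqx⟩
  refine ⟨part1, fun H => ?_⟩
  obtain ⟨nθ, hnθ0, hnθ⟩ := hru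
  have hθ0 : θ ≠ 0 := by
    intro h; rw [h] at hnθ; simp [zero_pow hnθ0.ne'] at hnθ
  have habsθ : ‖θ‖ = 1 := by
    have := Complex.norm_eq_one_of_pow_eq_one hnθ hnθ0.ne'
    exact this
  have hθim : θ.im ≠ 0 := by
    intro h0
    have h1 : Complex.normSq θ = 1 := by rw [← Complex.sq_norm, habsθ]; norm_num
    rw [Complex.normSq_apply, h0] at h1
    have h2 : (θ.re - 1) * (θ.re + 1) = 0 := by nlinarith
    rcases mul_eq_zero.mp h2 with h | h
    · exact hθ1 (Complex.ext (by simpa using by linarith : θ.re = (1:ℂ).re)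
        (by simpa using h0))
    · exact hθ1' (Complex.ext (by simpa using by linarith : θ.re = (-1:ℂ).re)
        (by simpa using h0))
  set v : ℂ := θ + (a:ℂ) with hvdef
  have hvim : v.im ≠ 0 := by
    rw [hvdef]
    simpa using hθim
  have hv0 : v ≠ 0 := fun h => hvim (by rw [h]; simp)
  have h1mem : (1:ℂ) ∈ ({1, θ, θ + 1, θ - 1, θ + (a : ℂ)} : Set ℂ) := by simp
  have hvmem : v ∈ ({1, θ, θ + 1, θ - 1, θ + (a : ℂ)} : Set ℂ) := by
    rw [hvdef]; simp
  have hne : (1:ℂ) ≠ v := by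
    intro h
    apply hθim
    have : θ = ((1 - a : ℚ) : ℂ) := by rw [hvdef] at h; push_cast; linear_combination -h
    rw [this]
    simp
  obtain ⟨-, q, hq⟩ := H 1 h1mem v hvmem hne
  rw [div_one] at hq
  -- construct the root of unity x = v / conj v
  have hconj0 : (starRingEnd ℂ) v ≠ 0 := by
    simpa using hv0
  set x : ℂ := v / (starRingEnd ℂ) v with hxdef
  have habsv : (‖v‖ : ℂ) ≠ 0 := by
    exact_mod_cast norm_ne_zero_iff.mpr hv0
  have hconjv : (starRingEnd ℂ) v
      = (‖v‖ : ℂ) * Complex.exp (-(Complex.arg v) * Complex.I) := by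
    conv_lhs => rw [← Complex.norm_mul_exp_arg_mul_I v]
    rw [map_mul, ← Complex.exp_conj, map_mul, Complex.conj_I, Complex.conj_ofReal,
      Complex.conj_ofReal]
    rw [show (Complex.arg v : ℂ) * -Complex.I = -(Complex.arg v) * Complex.I by ring]
  have hx : x = Complex.exp (2 * (Complex.arg v : ℂ) * Complex.I) := by
    rw [hxdef, hconjv]
    nth_rewrite 1 [← Complex.norm_mul_exp_arg_mul_I v]
    rw [mul_div_mul_left _ _ habsv, ← Complex.exp_sub]
    congr 1
    ring
  have hxru : x ^ q.den = 1 := by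
    rw [hx, ← Complex.exp_nat_mul]
    have hqd : ((q * q.den : ℚ) : ℂ) = ((q.num : ℚ) : ℂ) := by
      rw [Rat.mul_den_eq_num]
    have harg : ((q.den : ℂ)) * (2 * (Complex.arg v : ℂ) * Complex.I)
        = (q.num : ℂ) * (2 * (Real.pi : ℂ) * Complex.I) := by
      rw [hq]
      push_cast at hqd ⊢
      linear_combination (2 * (Real.pi : ℂ) * Complex.I) * hqd
    rw [harg]
    exact_mod_cast Complex.exp_int_mul_two_pi_mul_I q.num
  have hxne1 : x ≠ 1 := by
    intro h
    rw [hxdef, div_eq_one_iff_eq hconj0] at h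
    exact hvim (Complex.conj_eq_iff_im.mp h.symm)
  have hconjθ : (starRingEnd ℂ) θ = θ⁻¹ := (Complex.inv_eq_conj habsθ).symm
  have hconjv2 : (starRingEnd ℂ) v = θ⁻¹ + (a:ℂ) := by
    rw [hvdef, map_add, hconjθ]
    norm_num
  have hxeq : x * (θ⁻¹ + (a:ℂ)) = v := by
    rw [← hconjv2, hxdef, div_mul_cancel₀ _ hconj0]
  have heqx : θ - x / θ - (a : ℂ) * x + (a : ℂ) = 0 := by
    rw [hvdef] at hxeq
    field_simp at hxeq ⊢
    linear_combination -hxeq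
  exact part1 ⟨x, ⟨q.den, q.pos, hxru⟩, hxne1, heqx⟩
end

section
/- Let τ₁ = (i+1)(√3 − 1)/2 and V = Q·1 + Q·τ₁ ⊂ C. Then the four vectors 1, τ₁, τ₁+1, τ₁−1 form a rational 4-tuple: arg(τ₁) = π/4, arg(τ₁+1) = π/12, and arg(τ₁−1) = 5π/6, so the argument of the ratio of any two of the four vectors is a rational multiple of π. -/
open Real Complex

private lemma ratio_rat {u v : ℂ} (hu : u ≠ 0) (hv : v ≠ 0) {qu qv : ℚ}
    (hau : Complex.arg u = (qu : ℝ) * π) (hav : Complex.arg v = (qv : ℝ) * π) :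
    ∃ q : ℚ, Complex.arg (v / u) = (q : ℝ) * π := by
  have h := Complex.arg_div_coe_angle hv hu
  rw [hau, hav, ← Real.Angle.coe_sub] at h
  rw [Real.Angle.angle_eq_iff_two_pi_dvd_sub] at h
  obtain ⟨k, hk⟩ := h
  refine ⟨qv - qu + 2 * k, ?_⟩
  push_cast
  linarith

private lemma arg_of_form {z : ℂ} {r θ : ℝ} (hr : 0 < r) (hθ : θ ∈ Set.Ioc (-π) π)
    (hz : z = (r : ℂ) * (Real.cos θ + Real.sin θ * Complex.I)) :
    Complex.arg z = θ := by
  rw [hz, Complex.ofReal_cos, Complex.ofReal_sin]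
  exact Complex.arg_mul_cos_add_sin_mul_I hr hθ

/-- Let `τ₁ = (i+1)(√3 − 1)/2`.  Then `arg τ₁ = π/4`, `arg (τ₁+1) = π/12`,
`arg (τ₁−1) = 5π/6`, and the four vectors `1, τ₁, τ₁+1, τ₁−1` form a rational
4-tuple: the argument of the ratio of any two of them is a rational multiple
of `π`. -/
theorem dodecagonal_four_tuple :
    ∀ τ₁ : ℂ, τ₁ = (Complex.I + 1) * ((Real.sqrt 3 : ℂ) - 1) / 2 →
      Complex.arg τ₁ = Real.pi / 4 ∧
      Complex.arg (τ₁ + 1) = Real.pi / 12 ∧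
      Complex.arg (τ₁ - 1) = 5 * Real.pi / 6 ∧
      ∀ u ∈ ({1, τ₁, τ₁ + 1, τ₁ - 1} : Set ℂ),
        ∀ v ∈ ({1, τ₁, τ₁ + 1, τ₁ - 1} : Set ℂ),
          ∃ q : ℚ, Complex.arg (v / u) = (q : ℝ) * Real.pi := by
  intro τ₁ hτ
  have hπ := Real.pi_pos
  have h2 : Real.sqrt 2 ^ 2 = 2 := Real.sq_sqrt (by norm_num)
  have h3 : Real.sqrt 3 ^ 2 = 3 := Real.sq_sqrt (by norm_num)
  have h2p : 0 < Real.sqrt 2 := Real.sqrt_pos.2 (by norm_num)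
  have h3p : (1 : ℝ) < Real.sqrt 3 := by nlinarith [Real.sqrt_nonneg 3]
  -- arg τ₁ = π/4
  have harg1 : Complex.arg τ₁ = π / 4 := by
    refine arg_of_form (r := (Real.sqrt 3 - 1) * Real.sqrt 2 / 2) (by nlinarith)
      ⟨by linarith, by linarith⟩ ?_
    rw [hτ, Real.cos_pi_div_four, Real.sin_pi_div_four]
    apply Complex.ext <;> simp <;> nlinarith
  -- arg (τ₁ + 1) = π/12
  have harg2 : Complex.arg (τ₁ + 1) = π / 12 := by
    refine arg_of_form (r := Real.sqrt 2) h2p ⟨by linarith, by linarith⟩ ?_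
    have hc : Real.cos (π / 12) = Real.sqrt 2 * (1 + Real.sqrt 3) / 4 := by
      have : π / 12 = π / 3 - π / 4 := by ring
      rw [this, Real.cos_sub, Real.cos_pi_div_four, Real.sin_pi_div_four,
        Real.cos_pi_div_three, Real.sin_pi_div_three]
      ring
    have hs : Real.sin (π / 12) = Real.sqrt 2 * (Real.sqrt 3 - 1) / 4 := by
      have : π / 12 = π / 3 - π / 4 := by ring
      rw [this, Real.sin_sub, Real.cos_pi_div_four, Real.sin_pi_div_four,
        Real.cos_pi_div_three, Real.sin_pi_div_three]
      ring
    rw [hτ, hc, hs]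
    apply Complex.ext <;> simp <;> nlinarith
  -- arg (τ₁ - 1) = 5π/6
  have harg3 : Complex.arg (τ₁ - 1) = 5 * π / 6 := by
    refine arg_of_form (r := Real.sqrt 3 - 1) (by linarith) ⟨by linarith, by linarith⟩ ?_
    have hc : Real.cos (5 * π / 6) = -(Real.sqrt 3 / 2) := by
      have : 5 * π / 6 = π - π / 6 := by ring
      rw [this, Real.cos_pi_sub, Real.cos_pi_div_six]
    have hs : Real.sin (5 * π / 6) = 1 / 2 := by
      have : 5 * π / 6 = π - π / 6 := by ring
      rw [this, Real.sin_pi_sub, Real.sin_pi_div_six]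
    rw [hτ, hc, hs]
    apply Complex.ext <;> simp <;> nlinarith
  refine ⟨harg1, harg2, harg3, ?_⟩
  have hne : ∀ z : ℂ, Complex.arg z ≠ 0 → z ≠ 0 := by
    intro z h hz
    exact h (hz ▸ Complex.arg_zero)
  have hτne : τ₁ ≠ 0 := hne _ (by rw [harg1]; positivity)
  have hτ1ne : τ₁ + 1 ≠ 0 := hne _ (by rw [harg2]; positivity)
  have hτ2ne : τ₁ - 1 ≠ 0 := hne _ (by rw [harg3]; positivity)
  have harg1' : Complex.arg τ₁ = ((1/4 : ℚ) : ℝ) * π := by rw [harg1]; push_cast; ring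
  have harg2' : Complex.arg (τ₁ + 1) = ((1/12 : ℚ) : ℝ) * π := by rw [harg2]; push_cast; ring
  have harg3' : Complex.arg (τ₁ - 1) = ((5/6 : ℚ) : ℝ) * π := by rw [harg3]; push_cast; ring
  have harg0 : Complex.arg 1 = ((0 : ℚ) : ℝ) * π := by simp
  intro u hu v hv
  rcases hu with rfl | rfl | rfl | rfl <;> rcases hv with rfl | rfl | rfl | rfl <;>
    first
      | exact ratio_rat one_ne_zero one_ne_zero harg0 harg0
      | exact ratio_rat one_ne_zero hτne harg0 harg1'
      | exact ratio_rat one_ne_zero hτ1ne harg0 harg2'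
      | exact ratio_rat one_ne_zero hτ2ne harg0 harg3'
      | exact ratio_rat hτne one_ne_zero harg1' harg0
      | exact ratio_rat hτne hτne harg1' harg1'
      | exact ratio_rat hτne hτ1ne harg1' harg2'
      | exact ratio_rat hτne hτ2ne harg1' harg3'
      | exact ratio_rat hτ1ne one_ne_zero harg2' harg0
      | exact ratio_rat hτ1ne hτne harg2' harg1'
      | exact ratio_rat hτ1ne hτ1ne harg2' harg2'
      | exact ratio_rat hτ1ne hτ2ne harg2' harg3'
      | exact ratio_rat hτ2ne one_ne_zero harg3' harg0
      | exact ratio_rat hτ2ne hτne harg3' harg1'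
      | exact ratio_rat hτ2ne hτ1ne harg3' harg2'
      | exact ratio_rat hτ2ne hτ2ne harg3' harg3'
end
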